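/- Let (φ_c, φ'_c, Y_c) and (φ_d, φ'_d, Y_d) be two independent triples of random variables where φ_c, φ'_c, φ_d, φ'_d take values in ℕ and Y_c, Y_d take values in {0,1}, and suppose that almost surely Y_c = 0 implies φ_c = 0 and φ'_c = 0, and Y_d = 0 implies φ_d = 0 and φ'_d = 0. Define Y_e = max(Y_c, Y_d) and φ'_e = φ_c + φ_d if Y_c = Y_d = 1, φ'_e = φ'_c if Y_c = 1 and Y_d = 0, φ'_e = φ'_d if Y_c = 0 and Y_d = 1, and φ'_e = 0 otherwise. Set f_g(x) = P[φ_g = x, Y_g = 1], f'_g(x) = P[φ'_g = x, Y_g = 1] and P_g = P[Y_g = 1]. Then for every x ∈ ℕ: f'_e(x) = Σ_{i=0}^{x} f_c(i)·f_d(x−i) + (1−P_d)·f'_c(x) + (1−P_c)·f'_d(x). -/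
import Mathlib


open MeasureTheory ProbabilityTheory Finset
open scoped Classical

/-- Let `(φc, φ'c, Yc)` and `(φd, φ'd, Yd)` be two independent triples
of random variables, with `φc, φ'c, φd, φ'd` valued in `ℕ` and `Yc, Yd` valued in
`{0,1} ⊆ ℕ`, such that a.s. `Yc = 0 → φc = 0 ∧ φ'c = 0` and `Yd = 0 → φd = 0 ∧ φ'd = 0`.
Define `Ye = max Yc Yd` and `φ'e = φc + φd` if `Yc = Yd = 1`, `φ'e = φ'c` if `Yc = 1`,
`Yd = 0`, `φ'e = φ'd` if `Yc = 0`, `Yd = 1`, and `φ'e = 0` otherwise.  With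
`f_g(x) = P[φ_g = x, Y_g = 1]`, `f'_g(x) = P[φ'_g = x, Y_g = 1]`, `P_g = P[Y_g = 1]`,
for every `x ∈ ℕ`:
`f'_e(x) = ∑_{i=0}^{x} f_c(i) f_d(x-i) + (1-P_d) f'_c(x) + (1-P_c) f'_d(x)`. -/
theorem unrooted_PD_distribution_recursion
    {Ω : Type*} [MeasurableSpace Ω] (μ : Measure Ω) [IsProbabilityMeasure μ]
    (φc φ'c φd φ'd : Ω → ℕ) (Yc Yd : Ω → ℕ)
    (hYc01 : ∀ ω, Yc ω ≤ 1) (hYd01 : ∀ ω, Yd ω ≤ 1)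
    (hφc : Measurable φc) (hφ'c : Measurable φ'c)
    (hφd : Measurable φd) (hφ'd : Measurable φ'd)
    (hYc : Measurable Yc) (hYd : Measurable Yd)
    (hindep : IndepFun (fun ω => (φc ω, φ'c ω, Yc ω))
                       (fun ω => (φd ω, φ'd ω, Yd ω)) μ)
    (hc0 : ∀ᵐ ω ∂μ, Yc ω = 0 → φc ω = 0 ∧ φ'c ω = 0)
    (hd0 : ∀ᵐ ω ∂μ, Yd ω = 0 → φd ω = 0 ∧ φ'd ω = 0)
    (Ye : Ω → ℕ) (hYe : ∀ ω, Ye ω = max (Yc ω) (Yd ω))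
    (φ'e : Ω → ℕ)
    (hφ'e : ∀ ω, φ'e ω =
      if Yc ω = 1 ∧ Yd ω = 1 then φc ω + φd ω
      else if Yc ω = 1 then φ'c ω
      else if Yd ω = 1 then φ'd ω
      else 0)
    (fc fd f'c f'd f'e : ℕ → ℝ)
    (hfc : ∀ x, fc x = (μ {ω | φc ω = x ∧ Yc ω = 1}).toReal)
    (hfd : ∀ x, fd x = (μ {ω | φd ω = x ∧ Yd ω = 1}).toReal)
    (hf'c : ∀ x, f'c x = (μ {ω | φ'c ω = x ∧ Yc ω = 1}).toReal)
    (hf'd : ∀ x, f'd x = (μ {ω | φ'd ω = x ∧ Yd ω = 1}).toReal)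
    (hf'e : ∀ x, f'e x = (μ {ω | φ'e ω = x ∧ Ye ω = 1}).toReal)
    (Pc Pd : ℝ)
    (hPc : Pc = (μ {ω | Yc ω = 1}).toReal)
    (hPd : Pd = (μ {ω | Yd ω = 1}).toReal) :
    ∀ x : ℕ,
      f'e x = (∑ i ∈ Finset.range (x + 1), fc i * fd (x - i))
        + (1 - Pd) * f'c x + (1 - Pc) * f'd x := by
  intro x
  -- independence of preimage events
  have ind : ∀ (s t : Set (ℕ × ℕ × ℕ)),
      μ ((fun ω => (φc ω, φ'c ω, Yc ω)) ⁻¹' s ∩ (fun ω => (φd ω, φ'd ω, Yd ω)) ⁻¹' t)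
        = μ ((fun ω => (φc ω, φ'c ω, Yc ω)) ⁻¹' s)
          * μ ((fun ω => (φd ω, φ'd ω, Yd ω)) ⁻¹' t) := fun s t =>
    hindep.measure_inter_preimage_eq_mul s t (Set.to_countable s).measurableSet
      (Set.to_countable t).measurableSet
  classical
  -- the three disjoint events
  set A : Set Ω := {ω | Yc ω = 1 ∧ Yd ω = 1 ∧ φc ω + φd ω = x} with hA
  set B : Set Ω := {ω | φ'c ω = x ∧ Yc ω = 1 ∧ Yd ω = 0} with hB
  set C : Set Ω := {ω | Yc ω = 0 ∧ φ'd ω = x ∧ Yd ω = 1} with hC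
  have hset : {ω | φ'e ω = x ∧ Ye ω = 1} = A ∪ B ∪ C := by
    ext ω
    rcases Nat.le_one_iff_eq_zero_or_eq_one.mp (hYc01 ω) with h1 | h1 <;>
      rcases Nat.le_one_iff_eq_zero_or_eq_one.mp (hYd01 ω) with h2 | h2 <;>
        simp [hA, hB, hC, hφ'e ω, hYe ω, h1, h2, and_comm]
  -- measurability
  have mA : MeasurableSet A := by
    have : A = Yc ⁻¹' {1} ∩ (Yd ⁻¹' {1} ∩ (fun ω => φc ω + φd ω) ⁻¹' {x}) := by
      ext ω; simp [hA, and_assoc]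
    rw [this]
    exact (hYc (measurableSet_singleton _)).inter
      ((hYd (measurableSet_singleton _)).inter ((hφc.add hφd) (measurableSet_singleton _)))
  have mB : MeasurableSet B := by
    have : B = φ'c ⁻¹' {x} ∩ (Yc ⁻¹' {1} ∩ Yd ⁻¹' {0}) := by
      ext ω; simp [hB, and_assoc]
    rw [this]
    exact (hφ'c (measurableSet_singleton _)).inter
      ((hYc (measurableSet_singleton _)).inter (hYd (measurableSet_singleton _)))
  have mC : MeasurableSet C := by
    have : C = Yc ⁻¹' {0} ∩ (φ'd ⁻¹' {x} ∩ Yd ⁻¹' {1}) := by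
      ext ω; simp [hC, and_assoc]
    rw [this]
    exact (hYc (measurableSet_singleton _)).inter
      ((hφ'd (measurableSet_singleton _)).inter (hYd (measurableSet_singleton _)))
  -- additivity over the three disjoint events
  have hdisjAB : Disjoint A B := by
    rw [Set.disjoint_left]; rintro ω ⟨_, h1, _⟩ ⟨_, _, h2⟩; simp_all
  have hdisjAC : Disjoint A C := by
    rw [Set.disjoint_left]; rintro ω ⟨h1, _, _⟩ ⟨h2, _, _⟩; simp_all
  have hdisjBC : Disjoint B C := by
    rw [Set.disjoint_left]; rintro ω ⟨_, h1, _⟩ ⟨h2, _, _⟩; simp_all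
  have hsum : μ (A ∪ B ∪ C) = μ A + μ B + μ C := by
    rw [measure_union (hdisjAC.union_left hdisjBC) mC, measure_union hdisjAB mB]
  -- μ A as a convolution sum
  have hAdecomp : A = ⋃ i ∈ Finset.range (x + 1),
      ({ω | φc ω = i ∧ Yc ω = 1} ∩ {ω | φd ω = x - i ∧ Yd ω = 1}) := by
    ext ω
    simp only [hA, Set.mem_setOf_eq, Set.mem_iUnion, Finset.mem_range, Set.mem_inter_iff]
    constructor
    · rintro ⟨h1, h2, h3⟩
      exact ⟨φc ω, by omega, ⟨rfl, h1⟩, ⟨by omega, h2⟩⟩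
    · rintro ⟨i, hi, ⟨hci, h1⟩, ⟨hdi, h2⟩⟩
      exact ⟨h1, h2, by omega⟩
  have hmuA : μ A = ∑ i ∈ Finset.range (x + 1),
      μ {ω | φc ω = i ∧ Yc ω = 1} * μ {ω | φd ω = x - i ∧ Yd ω = 1} := by
    rw [hAdecomp, measure_biUnion_finset]
    · refine Finset.sum_congr rfl fun i _ => ?_
      have h1 : {ω | φc ω = i ∧ Yc ω = 1}
          = (fun ω => (φc ω, φ'c ω, Yc ω)) ⁻¹' {p | p.1 = i ∧ p.2.2 = 1} := rfl
      have h2 : {ω | φd ω = x - i ∧ Yd ω = 1}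
          = (fun ω => (φd ω, φ'd ω, Yd ω)) ⁻¹' {p | p.1 = x - i ∧ p.2.2 = 1} := rfl
      rw [h1, h2, ind]
    · intro i _ j _ hij
      rw [Function.onFun, Set.disjoint_left]
      rintro ω ⟨⟨h1, _⟩, _⟩ ⟨⟨h2, _⟩, _⟩
      exact hij (h1 ▸ h2)
    · intro i _
      exact ((hφc (measurableSet_singleton _)).inter (hYc (measurableSet_singleton _))).inter
        ((hφd (measurableSet_singleton _)).inter (hYd (measurableSet_singleton _)))
  -- μ B and μ C via independence
  have hmuB : μ B = μ {ω | φ'c ω = x ∧ Yc ω = 1} * μ {ω | Yd ω = 0} := by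
    have h1 : B = (fun ω => (φc ω, φ'c ω, Yc ω)) ⁻¹' {p | p.2.1 = x ∧ p.2.2 = 1}
        ∩ (fun ω => (φd ω, φ'd ω, Yd ω)) ⁻¹' {p | p.2.2 = 0} := by
      ext ω; simp [hB, and_assoc]
    rw [h1, ind]; rfl
  have hmuC : μ C = μ {ω | Yc ω = 0} * μ {ω | φ'd ω = x ∧ Yd ω = 1} := by
    have h1 : C = (fun ω => (φc ω, φ'c ω, Yc ω)) ⁻¹' {p | p.2.2 = 0}
        ∩ (fun ω => (φd ω, φ'd ω, Yd ω)) ⁻¹' {p | p.2.1 = x ∧ p.2.2 = 1} := by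
      ext ω; simp [hC, and_assoc]
    rw [h1, ind]; rfl
  -- complement probabilities
  have hYc0 : (μ {ω | Yc ω = 0}).toReal = 1 - Pc := by
    have hc : {ω | Yc ω = 0} = {ω | Yc ω = 1}ᶜ := by
      ext ω
      rcases Nat.le_one_iff_eq_zero_or_eq_one.mp (hYc01 ω) with h | h <;> simp [h]
    have mYc1 : MeasurableSet {ω : Ω | Yc ω = 1} := hYc (measurableSet_singleton 1)
    rw [hc, measure_compl mYc1 (measure_ne_top _ _), measure_univ,
      ENNReal.toReal_sub_of_le prob_le_one ENNReal.one_ne_top, ENNReal.toReal_one, hPc]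
  have hYd0 : (μ {ω | Yd ω = 0}).toReal = 1 - Pd := by
    have hd : {ω | Yd ω = 0} = {ω | Yd ω = 1}ᶜ := by
      ext ω
      rcases Nat.le_one_iff_eq_zero_or_eq_one.mp (hYd01 ω) with h | h <;> simp [h]
    have mYd1 : MeasurableSet {ω : Ω | Yd ω = 1} := hYd (measurableSet_singleton 1)
    rw [hd, measure_compl mYd1 (measure_ne_top _ _), measure_univ,
      ENNReal.toReal_sub_of_le prob_le_one ENNReal.one_ne_top, ENNReal.toReal_one, hPd]
  -- put everything together
  rw [hf'e, hset, hsum, ENNReal.toReal_add (by finiteness) (by finiteness),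
    ENNReal.toReal_add (by finiteness) (by finiteness), hmuA, hmuB, hmuC,
    ENNReal.toReal_sum (fun i _ => by finiteness), ENNReal.toReal_mul, ENNReal.toReal_mul,
    hYc0, hYd0]
  simp only [ENNReal.toReal_mul, hfc, hfd, hf'c, hf'd]
  ring
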